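/- Failure of the Dini condition in three dimensions (Proposition 7.3): There exist a nonempty open bounded convex set Ω ⊆ ℝ³ and a point x ∈ ∂Ω such that the Dini integral diverges: ∫_δ¹ M_x(t)/t² dt → ∞ as δ → 0⁺ (equivalently, the function t ↦ M_x(t)/t² is not Lebesgue integrable on (0,1)). -/

import Mathlib

open Set
open scoped RealInnerProductSpace

noncomputable section

/-- A unit vector `ν` is an outer supporting normal of `Ω` at `y` if
`⟨ν, z − y⟩ ≤ 0` for all `z ∈ Ω`. -/
def IsOuterNormal {E : Type*} [NormedAddCommGroup E] [InnerProductSpace ℝ E]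
    (Ω : Set E) (y ν : E) : Prop :=
  ‖ν‖ = 1 ∧ ∀ z ∈ Ω, ⟪ν, z - y⟫ ≤ 0

/-- `M_x(t) = sup {⟨ν, y − x⟩ : y ∈ ∂Ω, 0 < ‖y − x‖ ≤ t, ν an outer supporting normal at y}`
(`sSup ∅ = 0` in `ℝ`, so the empty case gives `0`). -/
noncomputable def Mfun {E : Type*} [NormedAddCommGroup E] [InnerProductSpace ℝ E]
    (Ω : Set E) (x : E) (t : ℝ) : ℝ :=
  sSup {m : ℝ | ∃ y ν : E, y ∈ frontier Ω ∧ 0 < ‖y - x‖ ∧ ‖y - x‖ ≤ t ∧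
    IsOuterNormal Ω y ν ∧ m = ⟪ν, y - x⟫}

/-- The rescaled spherical slice `V_t = {ω ∈ 𝕊^{n−1} : t·ω ∈ Ω}`. -/
def Vslice {E : Type*} [NormedAddCommGroup E] [InnerProductSpace ℝ E]
    (Ω : Set E) (t : ℝ) : Set E :=
  {ω | ‖ω‖ = 1 ∧ t • ω ∈ Ω}

/-- `S_c = {t ∈ (0,1) : M₀(s) ≤ c·s for all s ∈ [t/4, 4t]}`. -/
def Sset {E : Type*} [NormedAddCommGroup E] [InnerProductSpace ℝ E]
    (Ω : Set E) (c : ℝ) : Set ℝ :=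
  {t | t ∈ Ioo (0:ℝ) 1 ∧ ∀ s ∈ Icc (t/4) (4*t), Mfun Ω 0 s ≤ c * s}

/-- Cap hypothesis: the slice `V₁` contains the geodesic cap of radius `rstar` around
the unit vector `e`. -/
def CapHyp {E : Type*} [NormedAddCommGroup E] [InnerProductSpace ℝ E]
    (Ω : Set E) (e : E) (rstar : ℝ) : Prop :=
  ‖e‖ = 1 ∧ ∀ ω : E, ‖ω‖ = 1 → Real.cos rstar < ⟪ω, e⟫ → ω ∈ Vslice Ω 1


open MeasureTheory

namespace DiniCtr
open scoped ENNReal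

abbrev E3 := EuclideanSpace ℝ (Fin 3)

def pt (a b c : ℝ) : E3 := (WithLp.equiv 2 (Fin 3 → ℝ)).symm ![a, b, c]

@[simp] lemma pt_zero (a b c : ℝ) : pt a b c 0 = a := rfl
@[simp] lemma pt_one (a b c : ℝ) : pt a b c 1 = b := rfl
@[simp] lemma pt_two (a b c : ℝ) : pt a b c 2 = c := rfl

lemma coord_abs_le_norm (z : E3) (i : Fin 3) : |z i| ≤ ‖z‖ := by
  rw [EuclideanSpace.norm_eq]
  rw [show |z i| = Real.sqrt (‖z i‖ ^ 2) by
    rw [Real.sqrt_sq (norm_nonneg _)]; exact (Real.norm_eq_abs _).symm]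
  apply Real.sqrt_le_sqrt
  exact Finset.single_le_sum (fun j _ => sq_nonneg (‖z j‖)) (Finset.mem_univ i)

lemma norm_le_sum3 (z : E3) : ‖z‖ ≤ |z 0| + |z 1| + |z 2| := by
  rw [EuclideanSpace.norm_eq, Fin.sum_univ_three]
  rw [show |z 0| + |z 1| + |z 2| = Real.sqrt ((|z 0| + |z 1| + |z 2|) ^ 2) by
    rw [Real.sqrt_sq (by positivity)]]
  apply Real.sqrt_le_sqrt
  simp only [Real.norm_eq_abs]
  nlinarith [abs_nonneg (z 0), abs_nonneg (z 1), abs_nonneg (z 2), sq_abs (z 0), sq_abs (z 1), sq_abs (z 2)]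

lemma norm3_eq (z : E3) : ‖z‖ = Real.sqrt ((z 0)^2 + (z 1)^2 + (z 2)^2) := by
  rw [EuclideanSpace.norm_eq, Fin.sum_univ_three]
  simp [Real.norm_eq_abs, sq_abs]

lemma inner3_eq (z w : E3) : ⟪z, w⟫ = z 0 * w 0 + z 1 * w 1 + z 2 * w 2 := by
  rw [PiLp.inner_apply, Fin.sum_univ_three]
  simp [RCLike.inner_apply, mul_comm]



abbrev J := ℕ × ℕ × ℕ

def valid (j : J) : Prop := 1 ≤ j.1 ∧ j.2.1 < 4 ^ j.1 ∧ j.2.2 < 2 ^ j.1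

instance : DecidablePred valid := fun j => by unfold valid; infer_instance

def Dex (j : J) : ℕ := 8 ^ j.1 + j.2.1 * (2 ^ j.1 + 2 * j.1 + 2) + j.2.2

lemma two_mul_add_two_le (b : ℕ) : 2 * b + 2 ≤ 4 * 2 ^ b := by
  have := b.lt_two_pow_self
  omega

lemma two_mul_add_two_le' {b : ℕ} (hb : 1 ≤ b) : 2 * b + 2 ≤ 8 ^ b := by
  calc 2 * b + 2 ≤ 4 * 2 ^ b := two_mul_add_two_le b
  _ ≤ 4 ^ b * 2 ^ b := by
      have : 4 ≤ 4 ^ b := by calc 4 = 4 ^ 1 := rfl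
                                  _ ≤ 4 ^ b := Nat.pow_le_pow_right (by norm_num) hb
      exact Nat.mul_le_mul_right _ this
  _ = 8 ^ b := by rw [← Nat.mul_pow]

lemma Dex_le {j : J} (h : valid j) : Dex j ≤ 7 * 8 ^ j.1 := by
  obtain ⟨hb, hr, hk⟩ := h
  have h1 : j.2.1 * (2 ^ j.1 + 2 * j.1 + 2) ≤ 4 ^ j.1 * (2 ^ j.1 + 2 * j.1 + 2) :=
    Nat.mul_le_mul_right _ hr.le
  have h2 : 4 ^ j.1 * 2 ^ j.1 = 8 ^ j.1 := by rw [← Nat.mul_pow]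
  have h3 : 4 ^ j.1 * (2 * j.1 + 2) ≤ 4 ^ j.1 * (4 * 2 ^ j.1) :=
    Nat.mul_le_mul_left _ (two_mul_add_two_le j.1)
  have h4 : 4 ^ j.1 * (4 * 2 ^ j.1) = 4 * 8 ^ j.1 := by rw [← h2]; ring
  have h5 : j.2.2 ≤ 8 ^ j.1 := by
    calc j.2.2 ≤ 2 ^ j.1 := hk.le
    _ ≤ 8 ^ j.1 := Nat.pow_le_pow_left (by norm_num) _
  unfold Dex
  nlinarith [Nat.mul_le_mul_left (4 ^ j.1) (two_mul_add_two_le j.1)]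

/-- lexicographic order on levels -/
def levLt (i j : J) : Prop := i.1 < j.1 ∨ (i.1 = j.1 ∧ i.2.1 < j.2.1)

lemma Dex_gap {i j : J} (hi : valid i) (hj : valid j) (h : levLt i j) :
    Dex i + (2 * i.1 + 2) ≤ Dex j := by
  obtain ⟨hbi, hri, hki⟩ := hi
  obtain ⟨hbj, hrj, hkj⟩ := hj
  rcases h with h | ⟨hbe, hrlt⟩
  · -- b_i < b_j
    have h1 : Dex i ≤ 7 * 8 ^ i.1 := Dex_le ⟨hbi, hri, hki⟩
    have h2 : 8 ^ (i.1 + 1) ≤ 8 ^ j.1 := Nat.pow_le_pow_right (by norm_num) h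
    have h3 : 8 ^ j.1 ≤ Dex j := by unfold Dex; omega
    have h4 : 2 * i.1 + 2 ≤ 8 ^ i.1 := two_mul_add_two_le' hbi
    have h5 : 8 ^ (i.1+1) = 8 * 8 ^ i.1 := by ring
    omega
  · -- same b, r_i < r_j
    unfold Dex
    rw [← hbe] at hrj hkj ⊢
    have h1 : (i.2.1 + 1) * (2 ^ i.1 + 2 * i.1 + 2) ≤ j.2.1 * (2 ^ i.1 + 2 * i.1 + 2) :=
      Nat.mul_le_mul_right _ hrlt
    have h2 : i.2.2 < 2 ^ i.1 := hki
    nlinarith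


lemma Dex_lt_of_levLt {i j : J} (hi : valid i) (hj : valid j) (h : levLt i j) :
    Dex i < Dex j := by
  have := Dex_gap hi hj h; omega

lemma Dex_ne {i j : J} (hi : valid i) (hj : valid j) (hne : i ≠ j) : Dex i ≠ Dex j := by
  have tri : levLt i j ∨ levLt j i ∨ (i.1 = j.1 ∧ i.2.1 = j.2.1) := by
    unfold levLt; omega
  rcases tri with h | h | ⟨h1, h2⟩
  · exact (Dex_lt_of_levLt hi hj h).ne
  · exact (Dex_lt_of_levLt hj hi h).ne'
  · have hk : i.2.2 ≠ j.2.2 := by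
      intro hk
      exact hne (Prod.ext h1 (Prod.ext h2 hk))
    unfold Dex
    rw [h1, h2]
    omega


def eps (j : J) : ℝ := (8:ℝ)⁻¹ ^ j.1
def Rad (j : J) : ℝ := 1 + 2 * (2:ℝ)⁻¹ ^ j.1 - j.2.1 * (8:ℝ)⁻¹ ^ j.1
def th (j : J) : ℝ := j.2.2 * (2 * (2:ℝ)⁻¹ ^ j.1)
def sg (j : J) : ℝ := (2:ℝ)⁻¹ ^ Dex j
def psi (j : J) : ℝ := eps j * sg j


lemma eps_pos (j : J) : 0 < eps j := by unfold eps; positivity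
lemma sg_pos (j : J) : 0 < sg j := by unfold sg; positivity
lemma psi_pos (j : J) : 0 < psi j := mul_pos (eps_pos j) (sg_pos j)

lemma eps_le_one (j : J) : eps j ≤ 1 := by
  unfold eps
  exact pow_le_one₀ (by norm_num) (by norm_num)

lemma eight_inv_le_two_inv (b : ℕ) : ((8:ℝ)⁻¹) ^ b ≤ ((2:ℝ)⁻¹) ^ b :=
  pow_le_pow_left₀ (by norm_num) (by norm_num) b

lemma Rad_le (j : J) : Rad j ≤ 1 + 2 * (2:ℝ)⁻¹ ^ j.1 := by
  unfold Rad
  have : (0:ℝ) ≤ j.2.1 * (8:ℝ)⁻¹ ^ j.1 := by positivity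
  linarith

lemma Rad_le_two {j : J} (h : 1 ≤ j.1) : Rad j ≤ 2 := by
  have h1 : ((2:ℝ)⁻¹) ^ j.1 ≤ (2:ℝ)⁻¹ ^ 1 := pow_le_pow_of_le_one (by norm_num) (by norm_num) h
  have := Rad_le j
  norm_num at h1
  linarith

lemma Rad_ge {j : J} (h : valid j) : 1 + (2:ℝ)⁻¹ ^ j.1 + (8:ℝ)⁻¹ ^ j.1 ≤ Rad j := by
  obtain ⟨hb, hr, hk⟩ := h
  have h1 : (j.2.1 : ℝ) ≤ 4 ^ j.1 - 1 := by
    have : (j.2.1 : ℝ) + 1 ≤ 4 ^ j.1 := by exact_mod_cast hr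
    linarith
  have h2 : (4:ℝ) ^ j.1 * (8:ℝ)⁻¹ ^ j.1 = (2:ℝ)⁻¹ ^ j.1 := by
    rw [← mul_pow]; norm_num
  have h3 : (0:ℝ) < (8:ℝ)⁻¹ ^ j.1 := by positivity
  have h4 : (j.2.1 : ℝ) * (8:ℝ)⁻¹ ^ j.1 ≤ ((4:ℝ) ^ j.1 - 1) * (8:ℝ)⁻¹ ^ j.1 :=
    mul_le_mul_of_nonneg_right h1 h3.le
  unfold Rad
  nlinarith

lemma Rad_ge_one {j : J} (h : valid j) : 1 ≤ Rad j := by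
  have := Rad_ge h
  have h1 : (0:ℝ) < (2:ℝ)⁻¹ ^ j.1 := by positivity
  have h2 : (0:ℝ) < (8:ℝ)⁻¹ ^ j.1 := by positivity
  linarith

lemma Rad_pos {j : J} (h : valid j) : 0 < Rad j := lt_of_lt_of_le one_pos (Rad_ge_one h)

lemma eps_lt_Rad {j : J} (h : valid j) : eps j < Rad j := by
  have h1 := Rad_ge_one h
  have h2 : eps j ≤ (2:ℝ)⁻¹ := by
    unfold eps
    calc ((8:ℝ)⁻¹) ^ j.1 ≤ ((2:ℝ)⁻¹) ^ j.1 := eight_inv_le_two_inv _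
    _ ≤ (2:ℝ)⁻¹ ^ 1 := pow_le_pow_of_le_one (by norm_num) (by norm_num) h.1
    _ = (2:ℝ)⁻¹ := pow_one _
  linarith

/-- the affine pieces -/
def g (j : J) (x y : ℝ) : ℝ :=
  if valid j then Rad j * Real.cos (th j) * x + Rad j * Real.sin (th j) * y - psi j else 0

def phi (x y : ℝ) : ℝ := ⨆ j : J, g j x y

lemma g_le_bound (j : J) (x y : ℝ) : g j x y ≤ 2 * |x| + 2 * |y| := by
  unfold g
  split
  · rename_i h
    have hR : |Rad j| ≤ 2 := abs_le.2 ⟨by nlinarith [Rad_pos h], Rad_le_two h.1⟩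
    have h1 : Rad j * Real.cos (th j) * x ≤ 2 * |x| := by
      calc Rad j * Real.cos (th j) * x ≤ |Rad j * Real.cos (th j) * x| := le_abs_self _
      _ = |Rad j| * |Real.cos (th j)| * |x| := by rw [abs_mul, abs_mul]
      _ ≤ 2 * 1 * |x| := by
          apply mul_le_mul_of_nonneg_right _ (abs_nonneg x)
          exact mul_le_mul hR (Real.abs_cos_le_one _) (abs_nonneg _) (by norm_num)
      _ = 2 * |x| := by ring
    have h2 : Rad j * Real.sin (th j) * y ≤ 2 * |y| := by
      calc Rad j * Real.sin (th j) * y ≤ |Rad j * Real.sin (th j) * y| := le_abs_self _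
      _ = |Rad j| * |Real.sin (th j)| * |y| := by rw [abs_mul, abs_mul]
      _ ≤ 2 * 1 * |y| := by
          apply mul_le_mul_of_nonneg_right _ (abs_nonneg y)
          exact mul_le_mul hR (Real.abs_sin_le_one _) (abs_nonneg _) (by norm_num)
      _ = 2 * |y| := by ring
    have := (psi_pos j).le
    linarith
  · positivity

lemma bddAbove_g (x y : ℝ) : BddAbove (Set.range fun j : J => g j x y) := by
  refine ⟨2 * |x| + 2 * |y|, ?_⟩
  rintro m ⟨j, rfl⟩
  exact g_le_bound j x y

lemma g_le_phi (j : J) (x y : ℝ) : g j x y ≤ phi x y := le_ciSup (bddAbove_g x y) j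

lemma phi_le {x y a : ℝ} (h : ∀ j : J, g j x y ≤ a) : phi x y ≤ a := ciSup_le h

lemma g_invalid (x y : ℝ) : g (0, 0, 0) x y = 0 := by
  unfold g valid
  simp

lemma phi_nonneg (x y : ℝ) : 0 ≤ phi x y := by
  have := g_le_phi (0, 0, 0) x y
  rwa [g_invalid] at this

lemma phi_zero : phi 0 0 = 0 := by
  apply le_antisymm _ (phi_nonneg 0 0)
  apply phi_le
  intro j
  unfold g
  split
  · have := (psi_pos j).le; nlinarith
  · exact le_refl 0


lemma cos_angle_le {b m : ℕ} (hb : 1 ≤ b) (hm1 : 1 ≤ m) (hm2 : m < 2 ^ b) :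
    Real.cos (m * (2 * (2:ℝ)⁻¹ ^ b)) ≤ 1 - (8:ℝ)⁻¹ ^ b := by
  set d : ℝ := 2 * (2:ℝ)⁻¹ ^ b with hd
  have hpb : (0:ℝ) < (2:ℝ)⁻¹ ^ b := by positivity
  have hpb2 : ((2:ℝ)⁻¹) ^ b ≤ (2:ℝ)⁻¹ := by
    calc ((2:ℝ)⁻¹) ^ b ≤ (2:ℝ)⁻¹ ^ 1 := pow_le_pow_of_le_one (by norm_num) (by norm_num) hb
    _ = (2:ℝ)⁻¹ := pow_one _
  have hd0 : 0 < d := by positivity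
  have hd1 : d ≤ 1 := by rw [hd]; linarith
  have hDle : (m:ℝ) * d ≤ 2 - d := by
    have h1 : (m:ℝ) ≤ 2 ^ b - 1 := by
      have : (m:ℝ) + 1 ≤ 2 ^ b := by exact_mod_cast hm2
      linarith
    have h2 : ((2:ℝ) ^ b) * ((2:ℝ)⁻¹ ^ b) = 1 := by
      rw [← mul_pow]; norm_num
    have h3 : (m:ℝ) * d ≤ ((2:ℝ) ^ b - 1) * d :=
      mul_le_mul_of_nonneg_right h1 hd0.le
    calc (m:ℝ) * d ≤ ((2:ℝ) ^ b - 1) * d := h3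
    _ = 2 - d := by rw [hd]; nlinarith [h2]
  have hDge : d ≤ (m:ℝ) * d := by
    nlinarith [hd0, show (1:ℝ) ≤ (m:ℝ) by exact_mod_cast hm1]
  have hcoscos : Real.cos ((m:ℝ) * d) ≤ Real.cos d := by
    apply Real.cos_le_cos_of_nonneg_of_le_pi hd0.le _ hDge
    have : (m:ℝ) * d ≤ 2 := by linarith
    nlinarith [Real.pi_gt_three]
  have hsin : d/2 - (d/2)^3/4 < Real.sin (d/2) :=
    by have := Real.sin_gt_sub_cube (x := d/2) (by linarith); nlinarith [pow_pos hd0 3]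
  have hsq : Real.sin (d/2) ^ 2 = 1/2 - Real.cos d / 2 := by
    have := Real.sin_sq_eq_half_sub (d/2)
    rw [show 2 * (d/2) = d by ring] at this
    exact this
  have hdd2 : d^2 ≤ d := by nlinarith
  have hdd3 : d^3 ≤ d^2 := by nlinarith
  have hs15 : (15/32) * d ≤ Real.sin (d/2) := by nlinarith
  have hsinpos : 0 ≤ Real.sin (d/2) := by nlinarith
  have hcosd : Real.cos d ≤ 1 - d^2/4 := by nlinarith [sq_nonneg (Real.sin (d/2) - (15/32)*d)]
  have hdd : d^2/4 = (4:ℝ)⁻¹ ^ b := by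
    have e : ((2:ℝ)⁻¹ ^ b)^2 = ((4:ℝ)⁻¹)^b := by
      rw [← pow_mul, mul_comm, pow_mul]; norm_num
    rw [hd, mul_pow, e]; norm_num
  have h48 : ((8:ℝ)⁻¹) ^ b ≤ ((4:ℝ)⁻¹) ^ b := pow_le_pow_left₀ (by norm_num) (by norm_num) b
  calc Real.cos ((m:ℝ) * d) ≤ Real.cos d := hcoscos
  _ ≤ 1 - d^2/4 := hcosd
  _ = 1 - (4:ℝ)⁻¹ ^ b := by rw [hdd]
  _ ≤ 1 - (8:ℝ)⁻¹ ^ b := by linarith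

def u1 (j : J) : ℝ := sg j * Real.cos (th j)
def u2 (j : J) : ℝ := sg j * Real.sin (th j)
def hgt (j : J) : ℝ := sg j * (Rad j - eps j)

lemma hgt_pos {j : J} (h : valid j) : 0 < hgt j := by
  have h1 := eps_lt_Rad h
  have h2 := sg_pos j
  unfold hgt; nlinarith

lemma hgt_le {j : J} (h : valid j) : hgt j ≤ 2 * sg j := by
  have h1 := Rad_le_two h.1
  have h2 := eps_pos j
  have h3 := sg_pos j
  unfold hgt; nlinarith

/-- the contact identity : plane j attains height `hgt j` at the point `(u1 j, u2 j)` -/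
lemma g_contact {j : J} (h : valid j) : g j (u1 j) (u2 j) = hgt j := by
  unfold g
  rw [if_pos h]
  unfold u1 u2 hgt psi
  linear_combination (sg j * Rad j) * (Real.sin_sq_add_cos_sq (th j))

/-- THE MASTER INEQUALITY : every plane lies below `hgt j` at the point `(u1 j, u2 j)` -/
lemma master {j : J} (hj : valid j) (i : J) : g i (u1 j) (u2 j) ≤ hgt j := by
  unfold g
  split
  case isFalse => exact (hgt_pos hj).le
  case isTrue hi =>
  have htrig : Rad i * Real.cos (th i) * u1 j + Rad i * Real.sin (th i) * u2 j
      = Rad i * sg j * Real.cos (th i - th j) := by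
    unfold u1 u2; rw [Real.cos_sub]; ring
  rw [htrig]
  have hRi0 : 0 ≤ Rad i := (Rad_pos hi).le
  have hsgj := sg_pos j
  have hsgi := sg_pos i
  have hψi := psi_pos i
  have hcos1 : Rad i * sg j * Real.cos (th i - th j) ≤ Rad i * sg j := by
    have h := mul_le_mul_of_nonneg_left (Real.cos_le_one (th i - th j))
      (show (0:ℝ) ≤ Rad i * sg j by positivity)
    rwa [mul_one] at h
  have tri : levLt i j ∨ levLt j i ∨ (i.1 = j.1 ∧ i.2.1 = j.2.1) := by
    unfold levLt; omega
  rcases tri with hlt | hlt | ⟨hb, hr⟩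
  · -- CASE A : level of i lexicographically before level of j
    have hble : i.1 ≤ j.1 := by rcases hlt with h | ⟨h, _⟩ <;> omega
    have step1 : Rad i - Rad j + eps j ≤ 4 * (2:ℝ)⁻¹ ^ i.1 := by
      have h1 := Rad_le i
      have h2 := Rad_ge_one hj
      have h3 : eps j ≤ (2:ℝ)⁻¹ ^ i.1 := by
        unfold eps
        calc ((8:ℝ)⁻¹) ^ j.1 ≤ (8:ℝ)⁻¹ ^ i.1 :=
              pow_le_pow_of_le_one (by norm_num) (by norm_num) hble
        _ ≤ (2:ℝ)⁻¹ ^ i.1 := eight_inv_le_two_inv i.1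
      have h4 : (0:ℝ) ≤ (2:ℝ)⁻¹ ^ i.1 := by positivity
      linarith
    obtain ⟨m, hm1, hm2⟩ : ∃ m, 2 * i.1 + 2 ≤ m ∧ Dex j = Dex i + m := by
      have := Dex_gap hi hj hlt
      exact ⟨Dex j - Dex i, by omega, by omega⟩
    have hsgeq : sg j = sg i * (2:ℝ)⁻¹ ^ m := by
      unfold sg; rw [hm2, pow_add]
    have hmle : ((2:ℝ)⁻¹) ^ m ≤ (2:ℝ)⁻¹ ^ (2 * i.1 + 2) :=
      pow_le_pow_of_le_one (by norm_num) (by norm_num) hm1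
    have key : (2:ℝ)⁻¹ ^ (2 * i.1 + 2) * (4 * (2:ℝ)⁻¹ ^ i.1) = (8:ℝ)⁻¹ ^ i.1 := by
      have e1 : ((2:ℝ)⁻¹) ^ (2 * i.1 + 2) = ((4:ℝ)⁻¹) ^ i.1 * 4⁻¹ := by
        rw [pow_add, pow_mul]; norm_num
      have e2 : ((4:ℝ)⁻¹) ^ i.1 * ((2:ℝ)⁻¹) ^ i.1 = ((8:ℝ)⁻¹) ^ i.1 := by
        rw [← mul_pow]; norm_num
      rw [e1, ← e2]; ring
    have main : sg j * (Rad i - Rad j + eps j) ≤ psi i := by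
      calc sg j * (Rad i - Rad j + eps j) ≤ sg j * (4 * (2:ℝ)⁻¹ ^ i.1) :=
            mul_le_mul_of_nonneg_left step1 hsgj.le
      _ = sg i * ((2:ℝ)⁻¹ ^ m * (4 * (2:ℝ)⁻¹ ^ i.1)) := by rw [hsgeq]; ring
      _ ≤ sg i * ((2:ℝ)⁻¹ ^ (2 * i.1 + 2) * (4 * (2:ℝ)⁻¹ ^ i.1)) := by
            apply mul_le_mul_of_nonneg_left _ hsgi.le
            apply mul_le_mul_of_nonneg_right hmle (by positivity)
      _ = sg i * (8:ℝ)⁻¹ ^ i.1 := by rw [key]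
      _ = psi i := by unfold psi eps; ring
    unfold hgt; nlinarith
  · -- CASE B : level of j lexicographically before level of i
    have hRle : Rad i ≤ Rad j - eps j := by
      rcases hlt with h | ⟨hbe, hrlt⟩
      · -- j.1 < i.1
        have h1 := Rad_le i
        have h2 := Rad_ge hj
        have h3 : ((2:ℝ)⁻¹) ^ i.1 ≤ (2:ℝ)⁻¹ ^ (j.1 + 1) :=
          pow_le_pow_of_le_one (by norm_num) (by norm_num) h
        have h4 : ((2:ℝ)⁻¹ : ℝ) ^ (j.1 + 1) = (2:ℝ)⁻¹ ^ j.1 * 2⁻¹ := by rw [pow_add, pow_one]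
        unfold eps
        have h5 : (0:ℝ) < (2:ℝ)⁻¹ ^ j.1 := by positivity
        nlinarith
      · -- same block, r_j < r_i
        unfold Rad eps
        rw [← hbe]
        have hc : (j.2.1 : ℝ) + 1 ≤ (i.2.1 : ℝ) := by exact_mod_cast hrlt
        have h5 : (0:ℝ) < (8:ℝ)⁻¹ ^ j.1 := by positivity
        nlinarith
    have : Rad i * sg j ≤ (Rad j - eps j) * sg j :=
      mul_le_mul_of_nonneg_right hRle hsgj.le
    unfold hgt; nlinarith
  · -- CASE C : same level
    have hRe : Rad i = Rad j := by unfold Rad; rw [hb, hr]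
    have hee : eps i = eps j := by unfold eps; rw [hb]
    rcases Nat.lt_trichotomy i.2.2 j.2.2 with hk | hk | hk
    · -- k_i < k_j : σ_i ≥ σ_j
      have hD : Dex i ≤ Dex j := by unfold Dex; rw [hb, hr]; omega
      have hsle : sg j ≤ sg i := pow_le_pow_of_le_one (by norm_num) (by norm_num) hD
      have h1 : psi i = eps j * sg i := by unfold psi; rw [hee]
      unfold hgt
      nlinarith [mul_le_mul_of_nonneg_left hsle (eps_pos j).le]
    · -- i = j
      have heq : i = j := Prod.ext hb (Prod.ext hr hk)
      subst heq
      rw [sub_self, Real.cos_zero]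
      unfold hgt psi
      ring_nf
      nlinarith [sg_pos i]
    · -- k_i > k_j : angular separation
      have hΔ : th i - th j = ((i.2.2 - j.2.2 : ℕ) : ℝ) * (2 * (2:ℝ)⁻¹ ^ j.1) := by
        unfold th
        rw [hb]
        have : ((i.2.2 - j.2.2 : ℕ) : ℝ) = (i.2.2 : ℝ) - (j.2.2 : ℝ) := by
          have := Nat.cast_sub (le_of_lt hk) (R := ℝ)
          exact this
        rw [this]; ring
      have hcos : Real.cos (th i - th j) ≤ 1 - (8:ℝ)⁻¹ ^ j.1 := by
        rw [hΔ]
        apply cos_angle_le hj.1 (by omega)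
        have h1 : i.2.2 < 2 ^ i.1 := hi.2.2
        have h2 : (2:ℕ) ^ i.1 = 2 ^ j.1 := by rw [hb]
        omega
      have hRj1 := Rad_ge_one hj
      have hεj := eps_pos j
      have h2 : Rad i * sg j * Real.cos (th i - th j)
          ≤ Rad i * sg j * (1 - (8:ℝ)⁻¹ ^ j.1) :=
        mul_le_mul_of_nonneg_left hcos (by positivity)
      have h3 : eps j = (8:ℝ)⁻¹ ^ j.1 := rfl
      unfold hgt
      rw [hRe] at h2 ⊢
      have hRj0 := Rad_pos hj
      rw [← h3] at h2
      have h4 : 1 * (sg j * eps j) ≤ Rad j * (sg j * eps j) :=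
        mul_le_mul_of_nonneg_right hRj1 (mul_nonneg hsgj.le hεj.le)
      linarith

lemma affpart_le {j : J} (h : valid j) (x y : ℝ) :
    Rad j * Real.cos (th j) * x + Rad j * Real.sin (th j) * y ≤ 2 * |x| + 2 * |y| := by
  have hR : |Rad j| ≤ 2 := abs_le.2 ⟨by nlinarith [Rad_pos h], Rad_le_two h.1⟩
  have h1 : Rad j * Real.cos (th j) * x ≤ 2 * |x| := by
    calc Rad j * Real.cos (th j) * x ≤ |Rad j * Real.cos (th j) * x| := le_abs_self _
    _ = |Rad j| * |Real.cos (th j)| * |x| := by rw [abs_mul, abs_mul]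
    _ ≤ 2 * 1 * |x| := by
        apply mul_le_mul_of_nonneg_right _ (abs_nonneg x)
        exact mul_le_mul hR (Real.abs_cos_le_one _) (abs_nonneg _) (by norm_num)
    _ = 2 * |x| := by ring
  have h2 : Rad j * Real.sin (th j) * y ≤ 2 * |y| := by
    calc Rad j * Real.sin (th j) * y ≤ |Rad j * Real.sin (th j) * y| := le_abs_self _
    _ = |Rad j| * |Real.sin (th j)| * |y| := by rw [abs_mul, abs_mul]
    _ ≤ 2 * 1 * |y| := by
        apply mul_le_mul_of_nonneg_right _ (abs_nonneg y)
        exact mul_le_mul hR (Real.abs_sin_le_one _) (abs_nonneg _) (by norm_num)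
    _ = 2 * |y| := by ring
  linarith

lemma g_diff_le (j : J) (x y x' y' : ℝ) :
    g j x y - g j x' y' ≤ 2 * |x - x'| + 2 * |y - y'| := by
  by_cases hv : valid j
  · have h := affpart_le hv (x - x') (y - y')
    simp only [g, if_pos hv]
    nlinarith [h]
  · simp only [g, if_neg hv, sub_zero]
    positivity

lemma phi_lip (x y x' y' : ℝ) :
    phi x y ≤ phi x' y' + (2 * |x - x'| + 2 * |y - y'|) := by
  apply phi_le
  intro j
  have h1 := g_diff_le j x y x' y'
  have h2 := g_le_phi j x' y'
  linarith

lemma g_affine (j : J) {a b : ℝ} (hab : a + b = 1) (x y x' y' : ℝ) :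
    g j (a * x + b * x') (a * y + b * y') = a * g j x y + b * g j x' y' := by
  unfold g
  split
  · linear_combination (psi j) * hab
  · ring

lemma comb_lt {a b p q P Q : ℝ} (ha : 0 ≤ a) (hb : 0 ≤ b) (hab : a + b = 1)
    (h1 : p < P) (h2 : q < Q) : a * p + b * q < a * P + b * Q := by
  rcases ha.lt_or_eq with h | h
  · have e1 : a * p < a * P := by exact mul_lt_mul_of_pos_left h1 h
    have e2 : b * q ≤ b * Q := mul_le_mul_of_nonneg_left h2.le hb
    linarith
  · have hb1 : b = 1 := by linarith
    rw [← h, hb1]; simpa using h2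

lemma phi_comb {a b : ℝ} (ha : 0 ≤ a) (hb : 0 ≤ b) (hab : a + b = 1) (x y x' y' : ℝ) :
    phi (a * x + b * x') (a * y + b * y') ≤ a * phi x y + b * phi x' y' := by
  apply phi_le
  intro j
  rw [g_affine j hab]
  exact add_le_add (mul_le_mul_of_nonneg_left (g_le_phi j x y) ha)
    (mul_le_mul_of_nonneg_left (g_le_phi j x' y') hb)

lemma phi3_cont : Continuous (fun z : E3 => phi (z 0) (z 1)) := by
  have hl : LipschitzWith 4 (fun z : E3 => phi (z 0) (z 1)) := by
    apply LipschitzWith.of_dist_le_mul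
    intro z w
    rw [Real.dist_eq, dist_eq_norm]
    have c0 : |z 0 - w 0| ≤ ‖z - w‖ := by simpa using coord_abs_le_norm (z - w) 0
    have c1 : |z 1 - w 1| ≤ ‖z - w‖ := by simpa using coord_abs_le_norm (z - w) 1
    have h1 := phi_lip (z 0) (z 1) (w 0) (w 1)
    have h2 := phi_lip (w 0) (w 1) (z 0) (z 1)
    rw [abs_sub_le_iff]
    have e0 : |w 0 - z 0| = |z 0 - w 0| := abs_sub_comm _ _
    have e1 : |w 1 - z 1| = |z 1 - w 1| := abs_sub_comm _ _
    constructor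
    · push_cast
      nlinarith [abs_nonneg (z 0 - w 0), abs_nonneg (z 1 - w 1)]
    · rw [e0, e1] at h2
      push_cast
      nlinarith [abs_nonneg (z 0 - w 0), abs_nonneg (z 1 - w 1)]
  exact hl.continuous

lemma coord_cont (i : Fin 3) : Continuous (fun z : E3 => z i) := by
  have hl : LipschitzWith 1 (fun z : E3 => z i) := by
    apply LipschitzWith.of_dist_le_mul
    intro z w
    rw [Real.dist_eq, dist_eq_norm]
    simpa using coord_abs_le_norm (z - w) i
  exact hl.continuous

def Om : Set E3 := {z : E3 | phi (z 0) (z 1) < z 2 ∧ ‖z‖ < 9}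

lemma isOpen_Om : IsOpen Om := by
  have h1 : IsOpen {z : E3 | phi (z 0) (z 1) < z 2} := isOpen_lt phi3_cont (coord_cont 2)
  have h2 : IsOpen {z : E3 | ‖z‖ < 9} := by
    have he : {z : E3 | ‖z‖ < 9} = Metric.ball 0 9 := by
      ext z; simp [Metric.mem_ball, dist_zero_right]
    rw [he]; exact Metric.isOpen_ball
  exact h1.inter h2

lemma bounded_Om : Bornology.IsBounded Om := by
  apply (Metric.isBounded_ball (x := (0:E3)) (r := 9)).subset
  intro z hz
  rw [Metric.mem_ball, dist_zero_right]
  exact hz.2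

lemma convex_Om : Convex ℝ Om := by
  intro z hz w hw a b ha hb hab
  have hco : ∀ i : Fin 3, (a • z + b • w) i = a * z i + b * w i := fun i => rfl
  constructor
  · rw [hco 0, hco 1, hco 2]
    calc phi (a * z 0 + b * w 0) (a * z 1 + b * w 1)
        ≤ a * phi (z 0) (z 1) + b * phi (w 0) (w 1) := phi_comb ha hb hab _ _ _ _
    _ < a * z 2 + b * w 2 := comb_lt ha hb hab hz.1 hw.1
  · calc ‖a • z + b • w‖ ≤ ‖a • z‖ + ‖b • w‖ := norm_add_le _ _
    _ = a * ‖z‖ + b * ‖w‖ := by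
        rw [norm_smul, norm_smul, Real.norm_eq_abs, Real.norm_eq_abs,
          abs_of_nonneg ha, abs_of_nonneg hb]
    _ < a * 9 + b * 9 := comb_lt ha hb hab hz.2 hw.2
    _ = 9 := by linarith

lemma Om_nonempty : Om.Nonempty := by
  refine ⟨pt 0 0 1, ?_, ?_⟩
  · simp only [pt_zero, pt_one, pt_two]
    rw [phi_zero]; norm_num
  · have := norm_le_sum3 (pt 0 0 1)
    simp only [pt_zero, pt_one, pt_two] at this
    simp only [abs_zero, abs_one] at this
    linarith

lemma mem_frontier_Om {z : E3} (h1 : phi (z 0) (z 1) = z 2) (h2 : ‖z‖ < 8) :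
    z ∈ frontier Om := by
  rw [isOpen_Om.frontier_eq]
  constructor
  · -- closure
    rw [Metric.mem_closure_iff]
    intro ε hε
    set δ : ℝ := min (ε / 2) 1 with hδdef
    have hδ0 : 0 < δ := lt_min (by linarith) one_pos
    have hδ1 : δ ≤ 1 := min_le_right _ _
    have hδε : δ < ε := lt_of_le_of_lt (min_le_left _ _) (by linarith)
    refine ⟨z + pt 0 0 δ, ⟨?_, ?_⟩, ?_⟩
    · have e : ∀ i : Fin 3, (z + pt 0 0 δ) i = z i + pt 0 0 δ i := fun i => rfl
      rw [e 0, e 1, e 2]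
      simp only [pt_zero, pt_one, pt_two, add_zero]
      rw [h1]; linarith
    · calc ‖z + pt 0 0 δ‖ ≤ ‖z‖ + ‖pt 0 0 δ‖ := norm_add_le _ _
      _ ≤ ‖z‖ + (|(0:ℝ)| + |(0:ℝ)| + |δ|) := by
          have := norm_le_sum3 (pt 0 0 δ)
          simp only [pt_zero, pt_one, pt_two] at this
          linarith
      _ < 9 := by
          rw [abs_zero, abs_of_nonneg hδ0.le]
          linarith
    · rw [dist_eq_norm]
      have e : z - (z + pt 0 0 δ) = -(pt 0 0 δ) := by abel
      rw [e, norm_neg]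
      have := norm_le_sum3 (pt 0 0 δ)
      simp only [pt_zero, pt_one, pt_two] at this
      rw [abs_zero, abs_of_nonneg hδ0.le] at this
      linarith
  · -- not a member
    intro hz
    have h := hz.1
    rw [h1] at h
    exact lt_irrefl _ h

lemma zero_mem_frontier : (0 : E3) ∈ frontier Om := by
  apply mem_frontier_Om
  · have e : ∀ i : Fin 3, (0 : E3) i = 0 := fun i => rfl
    rw [e 0, e 1, e 2, phi_zero]
  · rw [norm_zero]; norm_num

def yv (j : J) : E3 := pt (u1 j) (u2 j) (hgt j)

lemma sg_le_one (j : J) : sg j ≤ 1 := by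
  unfold sg
  exact pow_le_one₀ (by norm_num) (by norm_num)

lemma sg_small {j : J} (h : valid j) : sg j ≤ (2:ℝ)⁻¹ ^ 8 := by
  have hD : 8 ≤ Dex j := by
    have h8 : (8:ℕ) ^ 1 ≤ 8 ^ j.1 := Nat.pow_le_pow_right (by norm_num) h.1
    unfold Dex; omega
  exact pow_le_pow_of_le_one (by norm_num) (by norm_num) hD

lemma phi_at_u {j : J} (h : valid j) : phi (u1 j) (u2 j) = hgt j := by
  apply le_antisymm (phi_le (master h))
  rw [← g_contact h]
  exact g_le_phi j _ _

lemma yv_norm {j : J} (h : valid j) : ‖yv j‖ ≤ 3 * sg j := by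
  have hσ := sg_pos j
  rw [norm3_eq]
  simp only [yv, pt_zero, pt_one, pt_two]
  rw [show 3 * sg j = Real.sqrt ((3 * sg j) ^ 2) by rw [Real.sqrt_sq (by positivity)]]
  apply Real.sqrt_le_sqrt
  have htr := Real.sin_sq_add_cos_sq (th j)
  have hh1 := hgt_pos h
  have hh2 := hgt_le h
  unfold u1 u2
  nlinarith [sq_nonneg (sg j)]

lemma yv_frontier {j : J} (h : valid j) : yv j ∈ frontier Om := by
  apply mem_frontier_Om
  · simp only [yv, pt_zero, pt_one, pt_two]
    exact phi_at_u h
  · have h1 := yv_norm h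
    have h2 := sg_le_one j
    have h3 := sg_pos j
    linarith

def nvec (j : J) : E3 := pt (Rad j * Real.cos (th j)) (Rad j * Real.sin (th j)) (-1)
def sj (j : J) : ℝ := Real.sqrt (Rad j ^ 2 + 1)
def nu (j : J) : E3 := (sj j)⁻¹ • nvec j

lemma sj_pos (j : J) : 0 < sj j := Real.sqrt_pos.2 (by positivity)

lemma sj_le_three {j : J} (h : valid j) : sj j ≤ 3 := by
  have h1 : Rad j ^ 2 + 1 ≤ 9 := by nlinarith [Rad_le_two h.1, Rad_pos h]
  calc sj j ≤ Real.sqrt 9 := Real.sqrt_le_sqrt h1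
  _ = 3 := by rw [show (9:ℝ) = 3 ^ 2 by norm_num, Real.sqrt_sq (by norm_num : (0:ℝ) ≤ 3)]

lemma nvec_norm (j : J) : ‖nvec j‖ = sj j := by
  rw [norm3_eq]
  simp only [nvec, pt_zero, pt_one, pt_two]
  unfold sj
  congr 1
  linear_combination (Rad j ^ 2) * Real.sin_sq_add_cos_sq (th j)

lemma nu_norm (j : J) : ‖nu j‖ = 1 := by
  unfold nu
  rw [norm_smul, Real.norm_eq_abs, abs_of_nonneg (inv_nonneg.2 (sj_pos j).le), nvec_norm]
  exact inv_mul_cancel₀ (sj_pos j).ne'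

lemma inner_nu (j : J) (w : E3) :
    (inner ℝ (nu j) w : ℝ) =
      (sj j)⁻¹ * (Rad j * Real.cos (th j) * w 0 + Rad j * Real.sin (th j) * w 1 - w 2) := by
  unfold nu
  rw [real_inner_smul_left, inner3_eq]
  simp only [nvec, pt_zero, pt_one, pt_two]
  ring

lemma contact_eq {j : J} (h : valid j) :
    Rad j * Real.cos (th j) * u1 j + Rad j * Real.sin (th j) * u2 j - psi j = hgt j := by
  have hc := g_contact h
  unfold g at hc
  rw [if_pos h] at hc
  exact hc

lemma nu_outer {j : J} (h : valid j) : IsOuterNormal Om (yv j) (nu j) := by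
  constructor
  · exact nu_norm j
  · intro z hz
    have hsub : ∀ i : Fin 3, (z - yv j) i = z i - yv j i := fun i => rfl
    rw [inner_nu, hsub 0, hsub 1, hsub 2]
    simp only [yv, pt_zero, pt_one, pt_two]
    have hgz : g j (z 0) (z 1) < z 2 := lt_of_le_of_lt (g_le_phi j _ _) hz.1
    unfold g at hgz
    rw [if_pos h] at hgz
    have hct := contact_eq h
    have hexpr : Rad j * Real.cos (th j) * (z 0 - u1 j) +
        Rad j * Real.sin (th j) * (z 1 - u2 j) - (z 2 - hgt j) ≤ 0 := by nlinarith
    calc (sj j)⁻¹ * (Rad j * Real.cos (th j) * (z 0 - u1 j) +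
          Rad j * Real.sin (th j) * (z 1 - u2 j) - (z 2 - hgt j))
        ≤ (sj j)⁻¹ * 0 := mul_le_mul_of_nonneg_left hexpr (inv_nonneg.2 (sj_pos j).le)
    _ = 0 := mul_zero _

lemma inner_nu_yv {j : J} (h : valid j) : (inner ℝ (nu j) (yv j - 0) : ℝ) = (sj j)⁻¹ * psi j := by
  rw [sub_zero, inner_nu]
  simp only [yv, pt_zero, pt_one, pt_two]
  have hct := contact_eq h
  have e : Rad j * Real.cos (th j) * u1 j + Rad j * Real.sin (th j) * u2 j - hgt j = psi j := by
    linarith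
  rw [e]

lemma inner_nu_yv_ge {j : J} (h : valid j) : psi j / 3 ≤ (inner ℝ (nu j) (yv j - 0) : ℝ) := by
  rw [inner_nu_yv h]
  have h3 : 1 / 3 ≤ 1 / sj j := one_div_le_one_div_of_le (sj_pos j) (sj_le_three h)
  have hψ := (psi_pos j).le
  calc psi j / 3 = psi j * (1 / 3) := by ring
  _ ≤ psi j * (1 / sj j) := mul_le_mul_of_nonneg_left h3 hψ
  _ = (sj j)⁻¹ * psi j := by ring

lemma yv_norm_pos {j : J} (h : valid j) : 0 < ‖yv j - 0‖ := by
  rw [sub_zero, norm_pos_iff]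
  intro hzero
  have h2 : yv j 2 = (0 : E3) 2 := by rw [hzero]
  simp only [yv, pt_two] at h2
  have : (0:E3) 2 = 0 := rfl
  rw [this] at h2
  exact (hgt_pos h).ne' h2

lemma Mfun_lb {j : J} (h : valid j) {t : ℝ} (h3 : 3 * sg j < t) (h4 : t ≤ 1) :
    psi j / 3 ≤ Mfun Om 0 t := by
  refine le_trans (inner_nu_yv_ge h) (le_csSup ⟨1, ?_⟩ ?_)
  · rintro m ⟨y, ν, hyf, hy0, hyt, hν, rfl⟩
    calc (inner ℝ ν (y - 0) : ℝ) ≤ ‖ν‖ * ‖y - 0‖ := real_inner_le_norm _ _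
    _ = ‖y - 0‖ := by rw [hν.1, one_mul]
    _ ≤ 1 := le_trans hyt h4
  · refine ⟨yv j, nu j, yv_frontier h, yv_norm_pos h, ?_, nu_outer h, rfl⟩
    rw [sub_zero]
    exact le_trans (yv_norm h) h3.le

def Ij (j : J) : Set ℝ := Ioc (3 * sg j) (4 * sg j)

lemma four_sg_lt_one {j : J} (h : valid j) : 4 * sg j < 1 := by
  have h1 := sg_small h
  norm_num at h1
  linarith

lemma Ij_sub {j : J} (h : valid j) : Ij j ⊆ Ioo (0:ℝ) 1 := by
  rintro t ⟨ht1, ht2⟩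
  have hσ := sg_pos j
  exact ⟨lt_trans (by positivity) ht1, lt_of_le_of_lt ht2 (four_sg_lt_one h)⟩

lemma lb_on_Ij {j : J} (h : valid j) {t : ℝ} (ht : t ∈ Ij j) :
    ENNReal.ofReal (eps j / (48 * sg j)) ≤ ENNReal.ofReal (Mfun Om 0 t / t ^ 2) := by
  apply ENNReal.ofReal_le_ofReal
  obtain ⟨ht1, ht2⟩ := ht
  have hσ := sg_pos j
  have hε := eps_pos j
  have ht0 : 0 < t := lt_trans (by positivity) ht1
  have hM : psi j / 3 ≤ Mfun Om 0 t :=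
    Mfun_lb h ht1 (le_trans ht2 (four_sg_lt_one h).le)
  have ht2sq : t ^ 2 ≤ 16 * sg j ^ 2 := by nlinarith
  calc eps j / (48 * sg j) = (psi j / 3) / (16 * sg j ^ 2) := by
        unfold psi; field_simp; ring
  _ ≤ (psi j / 3) / t ^ 2 :=
        div_le_div_of_nonneg_left (div_nonneg (psi_pos j).le (by norm_num))
          (pow_pos ht0 2) ht2sq
  _ ≤ Mfun Om 0 t / t ^ 2 := by gcongr

open MeasureTheory in
lemma integral_Ij {j : J} (h : valid j) :
    ENNReal.ofReal (eps j / 48) ≤ ∫⁻ t in Ij j, ENNReal.ofReal (Mfun Om 0 t / t ^ 2) := by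
  have hmeas : MeasurableSet (Ij j) := measurableSet_Ioc
  have hσ := sg_pos j
  have hε := eps_pos j
  calc ENNReal.ofReal (eps j / 48)
      = ENNReal.ofReal (eps j / (48 * sg j)) * volume (Ij j) := by
        rw [show Ij j = Ioc (3 * sg j) (4 * sg j) from rfl, Real.volume_Ioc,
          show 4 * sg j - 3 * sg j = sg j by ring,
          ← ENNReal.ofReal_mul (by positivity)]
        congr 1
        field_simp
  _ = ∫⁻ _ in Ij j, ENNReal.ofReal (eps j / (48 * sg j)) := (setLIntegral_const _ _).symm
  _ ≤ ∫⁻ t in Ij j, ENNReal.ofReal (Mfun Om 0 t / t ^ 2) := by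
        apply lintegral_mono_ae
        filter_upwards [ae_restrict_mem hmeas] with t ht
        exact lb_on_Ij h ht

lemma Ij_disjoint_of_lt {a b : J} (hD : Dex a < Dex b) : Disjoint (Ij a) (Ij b) := by
  have hσb : sg b ≤ sg a * 2⁻¹ := by
    have h1 : sg b ≤ (2:ℝ)⁻¹ ^ (Dex a + 1) :=
      pow_le_pow_of_le_one (by norm_num) (by norm_num) hD
    rw [pow_succ] at h1
    exact h1
  rw [Set.disjoint_left]
  rintro t ⟨ht1, _⟩ ⟨_, hs2⟩
  have hσa := sg_pos a
  linarith

lemma Ij_disjoint {i j : J} (hi : valid i) (hj : valid j) (hne : i ≠ j) :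
    Disjoint (Ij i) (Ij j) := by
  rcases Nat.lt_trichotomy (Dex i) (Dex j) with hD | hD | hD
  · exact Ij_disjoint_of_lt hD
  · exact absurd hD (Dex_ne hi hj hne)
  · exact (Ij_disjoint_of_lt hD).symm

def blockF (b : ℕ) : Finset J :=
  ({b} : Finset ℕ) ×ˢ (Finset.range (4 ^ b) ×ˢ Finset.range (2 ^ b))

def FB (B : ℕ) : Finset J := (Finset.Icc 1 B).biUnion blockF

lemma mem_blockF {b : ℕ} {j : J} :
    j ∈ blockF b ↔ j.1 = b ∧ j.2.1 < 4 ^ b ∧ j.2.2 < 2 ^ b := by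
  obtain ⟨b1, r, k⟩ := j
  unfold blockF
  simp only [Finset.mem_product, Finset.mem_singleton, Finset.mem_range]

lemma FB_valid {B : ℕ} {j : J} (hj : j ∈ FB B) : valid j := by
  unfold FB at hj
  rw [Finset.mem_biUnion] at hj
  obtain ⟨b, hb, hjb⟩ := hj
  rw [Finset.mem_Icc] at hb
  rw [mem_blockF] at hjb
  obtain ⟨h1, h2, h3⟩ := hjb
  exact ⟨by omega, by rw [h1]; exact h2, by rw [h1]; exact h3⟩

lemma blockF_pairwise {B : ℕ} :
    Set.PairwiseDisjoint ↑(Finset.Icc 1 B) blockF := by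
  intro b1 _ b2 _ hne
  apply Finset.disjoint_left.2
  intro j hj1 hj2
  rw [mem_blockF] at hj1 hj2
  exact hne (hj1.1 ▸ hj2.1 ▸ rfl)

lemma blockF_sum (b : ℕ) :
    ∑ j ∈ blockF b, ENNReal.ofReal (eps j / 48) = ENNReal.ofReal (1 / 48) := by
  have hconst : ∀ j ∈ blockF b,
      ENNReal.ofReal (eps j / 48) = ENNReal.ofReal ((8:ℝ)⁻¹ ^ b / 48) := by
    intro j hj
    rw [mem_blockF] at hj
    unfold eps
    rw [hj.1]
  rw [Finset.sum_congr rfl hconst, Finset.sum_const]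
  unfold blockF
  rw [Finset.card_product, Finset.card_product, Finset.card_singleton,
    Finset.card_range, Finset.card_range, one_mul]
  rw [nsmul_eq_mul, ← ENNReal.ofReal_natCast (4 ^ b * 2 ^ b),
    ← ENNReal.ofReal_mul (by positivity)]
  congr 1
  push_cast
  rw [show ((4:ℝ) ^ b * 2 ^ b) = 8 ^ b by rw [← mul_pow]; norm_num,
    show ((8:ℝ)⁻¹) ^ b = ((8:ℝ) ^ b)⁻¹ by rw [inv_pow]]
  have h8 : (0:ℝ) < 8 ^ b := by positivity
  field_simp

open MeasureTheory in
lemma main_lb (B : ℕ) :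
    (B : ℝ≥0∞) * ENNReal.ofReal (1 / 48) ≤
      ∫⁻ t in Ioo (0:ℝ) 1, ENNReal.ofReal (Mfun Om 0 t / t ^ 2) := by
  have hsub : (⋃ j ∈ FB B, Ij j) ⊆ Ioo (0:ℝ) 1 := by
    simp only [Set.iUnion_subset_iff]
    intro j hj
    exact Ij_sub (FB_valid hj)
  have hpd : Set.PairwiseDisjoint ↑(FB B) Ij := by
    intro i hi j hj hne
    exact Ij_disjoint (FB_valid (by simpa using hi)) (FB_valid (by simpa using hj)) hne
  calc (B : ℝ≥0∞) * ENNReal.ofReal (1 / 48)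
      = ∑ _b ∈ Finset.Icc 1 B, ENNReal.ofReal (1 / 48) := by
        rw [Finset.sum_const, Nat.card_Icc, nsmul_eq_mul]
        norm_num
  _ = ∑ b ∈ Finset.Icc 1 B, ∑ j ∈ blockF b, ENNReal.ofReal (eps j / 48) := by
        apply Finset.sum_congr rfl
        intro b _
        rw [blockF_sum]
  _ = ∑ j ∈ FB B, ENNReal.ofReal (eps j / 48) := (Finset.sum_biUnion blockF_pairwise).symm
  _ ≤ ∑ j ∈ FB B, ∫⁻ t in Ij j, ENNReal.ofReal (Mfun Om 0 t / t ^ 2) :=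
        Finset.sum_le_sum fun j hj => integral_Ij (FB_valid hj)
  _ = ∫⁻ t in (⋃ j ∈ FB B, Ij j), ENNReal.ofReal (Mfun Om 0 t / t ^ 2) :=
        (lintegral_biUnion_finset hpd (fun j _ => measurableSet_Ioc) _).symm
  _ ≤ ∫⁻ t in Ioo (0:ℝ) 1, ENNReal.ofReal (Mfun Om 0 t / t ^ 2) :=
        lintegral_mono_set hsub

end DiniCtr

/-- Failure of the Dini condition in three dimensions (Proposition 7.3). -/
theorem dini_fails_dim_three :
    ∃ (Ω : Set (EuclideanSpace ℝ (Fin 3))) (x : EuclideanSpace ℝ (Fin 3)),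
      IsOpen Ω ∧ Bornology.IsBounded Ω ∧ Convex ℝ Ω ∧ Ω.Nonempty ∧ x ∈ frontier Ω ∧
      ∫⁻ t in Ioo (0:ℝ) 1, ENNReal.ofReal (Mfun Ω x t / t ^ 2) = ⊤ := by
  refine ⟨DiniCtr.Om, 0, DiniCtr.isOpen_Om, DiniCtr.bounded_Om, DiniCtr.convex_Om,
    DiniCtr.Om_nonempty, DiniCtr.zero_mem_frontier, ?_⟩
  by_contra hne
  obtain ⟨n, hn⟩ := ENNReal.exists_nat_gt hne
  have hB := DiniCtr.main_lb (48 * n)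
  have he : ((48 * n : ℕ) : ENNReal) * ENNReal.ofReal (1 / 48) = (n : ENNReal) := by
    rw [← ENNReal.ofReal_natCast (48 * n), ← ENNReal.ofReal_mul (by positivity),
      ← ENNReal.ofReal_natCast n]
    congr 1
    push_cast
    ring
  rw [he] at hB
  exact absurd hn (not_lt.2 hB)
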